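/- Let (X,κ) be a digital image such that the graph (X,κ) is a finite connected tree (acyclic connected graph) with #X > 1. Let E be the set of vertices of this graph that have degree 1. Then E is a minimal freezing set for (X,κ). -/

import Mathlib

/-- `c_u` adjacency on `ℤⁿ`: distinct points that differ by at most 1 in every
coordinate and differ in at most `u` coordinates. -/
def cuAdj (n u : ℕ) (x y : Fin n → ℤ) : Prop :=
  x ≠ y ∧ (∀ i, (x i - y i).natAbs ≤ 1) ∧
    (Finset.univ.filter fun i => x i ≠ y i).card ≤ u

/-- `(κ,λ)`-continuity of `f` on `X`: adjacent points have equal or adjacent images. -/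
def DigCont {α β : Type*} (κ : α → α → Prop) (lam : β → β → Prop)
    (X : Set α) (f : α → β) : Prop :=
  ∀ x ∈ X, ∀ x' ∈ X, κ x x' → f x = f x' ∨ lam (f x) (f x')

/-- `f ∈ C(X,κ)`: a `κ`-continuous self-map of `X`. -/
def InC {α : Type*} (κ : α → α → Prop) (X : Set α) (f : α → α) : Prop :=
  Set.MapsTo f X X ∧ DigCont κ κ X f

/-- `A` is a freezing set for `(X,κ)`: every `f ∈ C(X,κ)` fixing `A`
pointwise is the identity on `X`. -/
def FreezingSet {α : Type*} (κ : α → α → Prop) (X A : Set α) : Prop :=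
  ∀ f, InC κ X f → (∀ a ∈ A, f a = a) → ∀ x ∈ X, f x = x

open SimpleGraph

namespace Stmt16Aux

variable {V : Type*} {G : SimpleGraph V}

lemma getVert_append_le {u v w : V} (p : G.Walk u v) (q : G.Walk v w)
    {i : ℕ} (h : i ≤ p.length) : (p.append q).getVert i = p.getVert i := by
  rw [Walk.getVert_append]
  rcases lt_or_eq_of_le h with h | h
  · simp [h]
  · subst h
    simp [Walk.getVert_length, Walk.getVert_zero]

lemma path_length_eq_dist (ht : G.IsTree) {u v : V}
    (p : G.Walk u v) (hp : p.IsPath) : p.length = G.dist u v := by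
  classical
  obtain ⟨w, hw⟩ := ht.isConnected.exists_walk_length_eq_dist u v
  obtain ⟨q, -, hq⟩ := ht.existsUnique_path u v
  have h1 : p = q := hq p hp
  have h2 : w.bypass = q := hq _ w.bypass_isPath
  have hle : p.length ≤ G.dist u v := by
    calc p.length = w.bypass.length := by rw [h1, h2]
    _ ≤ w.length := w.length_bypass_le
    _ = G.dist u v := hw
  exact le_antisymm hle (SimpleGraph.dist_le p)

lemma dist_map_le (hc : G.Connected) (F : V → V)
    (hF : ∀ a b : V, G.Adj a b → F a = F b ∨ G.Adj (F a) (F b)) (a b : V) :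
    G.dist (F a) (F b) ≤ G.dist a b := by
  have key : ∀ {a b : V} (w : G.Walk a b),
      ∃ w' : G.Walk (F a) (F b), w'.length ≤ w.length := by
    intro a b w
    induction w with
    | nil => exact ⟨Walk.nil, le_rfl⟩
    | cons h p ih =>
      obtain ⟨w', hw'⟩ := ih
      rcases hF _ _ h with he | ha
      · exact ⟨w'.copy he.symm rfl, by simpa using hw'.trans (Nat.le_succ _)⟩
      · exact ⟨w'.cons ha, by simpa using Nat.succ_le_succ hw'⟩
  obtain ⟨w, hw⟩ := hc.exists_walk_length_eq_dist a b
  obtain ⟨w', hw'⟩ := key w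
  calc G.dist (F a) (F b) ≤ w'.length := SimpleGraph.dist_le w'
  _ ≤ w.length := hw'
  _ = G.dist a b := hw

/-- In a tree, two paths from `v` with different second vertices meet only at `v`. -/
lemma diverge (ht : G.IsTree) {v x y : V} {p : G.Walk v x} {q : G.Walk v y}
    (hp : p.IsPath) (hq : q.IsPath) (hne : p.getVert 1 ≠ q.getVert 1)
    {w : V} (hwp : w ∈ p.support) (hwq : w ∈ q.support) : w = v := by
  classical
  by_contra hw
  have hw' : v ≠ w := fun h => hw h.symm
  have htp : (p.takeUntil w hwp).IsPath := hp.takeUntil hwp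
  have htq : (q.takeUntil w hwq).IsPath := hq.takeUntil hwq
  obtain ⟨r, -, hr⟩ := ht.existsUnique_path v w
  have heq : p.takeUntil w hwp = q.takeUntil w hwq := by
    rw [hr _ htp, hr _ htq]
  have hlp : 1 ≤ (p.takeUntil w hwp).length := by
    rcases Nat.eq_zero_or_pos (p.takeUntil w hwp).length with h | h
    · exact absurd (Walk.eq_of_length_eq_zero h) hw'
    · exact h
  have hlq : 1 ≤ (q.takeUntil w hwq).length := by
    rcases Nat.eq_zero_or_pos (q.takeUntil w hwq).length with h | h
    · exact absurd (Walk.eq_of_length_eq_zero h) hw'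
    · exact h
  have hp1 : p.getVert 1 = (p.takeUntil w hwp).getVert 1 := by
    have := getVert_append_le (p.takeUntil w hwp) (p.dropUntil w hwp) hlp
    rwa [Walk.take_spec] at this
  have hq1 : q.getVert 1 = (q.takeUntil w hwq).getVert 1 := by
    have := getVert_append_le (q.takeUntil w hwq) (q.dropUntil w hwq) hlq
    rwa [Walk.take_spec] at this
  exact hne (by rw [hp1, hq1, heq])

/-- In a finite tree, from any vertex `v` with neighbor `b` there is a path starting
with the edge `v b` ending at a leaf. -/
lemma exists_leaf [Finite V] (ht : G.IsTree) {v b : V} (hadj : G.Adj v b) :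
    ∃ (l : V) (p : G.Walk v l), p.IsPath ∧ 1 ≤ p.length ∧ p.getVert 1 = b ∧
      {w : V | G.Adj l w}.ncard = 1 := by
  classical
  set S : Set V := {y : V | ∃ p : G.Walk v y, p.IsPath ∧ 1 ≤ p.length ∧ p.getVert 1 = b}
    with hS
  have hbS : b ∈ S := by
    refine ⟨Walk.nil.cons hadj, ?_, by simp, by simp⟩
    simp [Walk.isPath_def, hadj.ne]
  obtain ⟨l, hlS, hmax⟩ :=
    Set.Finite.exists_maximalFor (G.dist v) S (Set.toFinite S) ⟨b, hbS⟩
  obtain ⟨p, hp, hlen, hb1⟩ := hlS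
  have hrl : G.Adj (p.getVert (p.length - 1)) l := by
    have := p.adj_getVert_succ (i := p.length - 1) (by omega)
    rwa [Nat.sub_add_cancel hlen, Walk.getVert_length] at this
  have hall : ∀ c, G.Adj l c → c = p.getVert (p.length - 1) := by
    intro c hc
    by_cases hsup : c ∈ p.support
    · -- c occurs on p; the tail from c to l must be the single edge
      have hs : (p.dropUntil c hsup).IsPath := hp.dropUntil hsup
      have hone : (Walk.nil.cons hc.symm : G.Walk c l).IsPath := by
        simp [Walk.isPath_def, hc.ne']
      obtain ⟨r, -, hr⟩ := ht.existsUnique_path c l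
      have heq : p.dropUntil c hsup = Walk.nil.cons hc.symm := by
        rw [hr _ hs, hr _ hone]
      have hlen1 : (p.dropUntil c hsup).length = 1 := by rw [heq]; simp
      have hspec := Walk.take_spec p hsup
      have hlensum : (p.takeUntil c hsup).length + 1 = p.length := by
        have := congrArg Walk.length hspec
        rwa [Walk.length_append, hlen1] at this
      have h1 : p.getVert ((p.takeUntil c hsup).length) =
          (p.takeUntil c hsup).getVert ((p.takeUntil c hsup).length) := by
        have := getVert_append_le (p.takeUntil c hsup) (p.dropUntil c hsup)
          (le_refl (p.takeUntil c hsup).length)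
        rwa [Walk.take_spec] at this
      rw [Walk.getVert_length] at h1
      rw [← h1]
      congr 1
      omega
    · -- c is not on p: extend p; contradiction with maximality
      exfalso
      have hcpath : (p.concat hc).IsPath := by
        rw [Walk.isPath_def, Walk.concat_eq_append, Walk.support_append]
        refine List.Nodup.append (hp.support_nodup) ?_ ?_
        · simp
        · intro x hx hx'
          simp only [Walk.support_cons, Walk.support_nil, List.tail_cons,
            List.mem_cons, List.mem_singleton] at hx'
          rcases hx' with rfl | h
          · exact hsup hx
          · simp at h
      have hcS : c ∈ S := by
        refine ⟨p.concat hc, hcpath, ?_, ?_⟩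
        · rw [Walk.length_concat]; omega
        · rw [Walk.concat_eq_append, getVert_append_le _ _ hlen]
          exact hb1
      have hd1 : G.dist v l = p.length := (path_length_eq_dist ht p hp).symm
      have hd2 : G.dist v c = p.length + 1 := by
        rw [← Walk.length_concat p hc]
        exact (path_length_eq_dist ht _ hcpath).symm
      have := hmax hcS (by omega)
      omega
  refine ⟨l, p, hp, hlen, hb1, ?_⟩
  have : {w : V | G.Adj l w} = {p.getVert (p.length - 1)} := by
    ext w
    constructor
    · exact fun hw => hall w hw
    · intro hw
      simp only [Set.mem_singleton_iff] at hw
      subst hw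
      exact hrl.symm
  rw [this, Set.ncard_singleton]

end Stmt16Aux

/-- If the graph of a finite digital image `(X,κ)` with more than one point
is a tree (connected and acyclic), then the set `E` of vertices of degree 1
is a minimal freezing set for `(X,κ)`. -/
theorem stmt16 {n : ℕ} (κ : (Fin n → ℤ) → (Fin n → ℤ) → Prop)
    (hsymm : ∀ p q, κ p q → κ q p) (hirr : ∀ p, ¬ κ p p)
    (X : Set (Fin n → ℤ)) (hfin : X.Finite) (hcard : 1 < X.ncard)
    (G : SimpleGraph X) (hG : ∀ p q : X, G.Adj p q ↔ κ p q)
    (htree : G.IsTree)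
    (E : Set (Fin n → ℤ))
    (hE : E = {p ∈ X | ({q ∈ X | κ p q}).ncard = 1}) :
    FreezingSet κ X E ∧ ∀ B ⊂ E, ¬ FreezingSet κ X B := by
  classical
  haveI : Finite ↥X := hfin.to_subtype
  have hdeg : ∀ v : X, {q ∈ X | κ ↑v q}.ncard = {w : ↥X | G.Adj v w}.ncard := by
    intro v
    have himg : {q ∈ X | κ ↑v q} = Subtype.val '' {w : ↥X | G.Adj v w} := by
      ext q
      constructor
      · rintro ⟨hqX, hk⟩
        exact ⟨⟨q, hqX⟩, (hG v ⟨q, hqX⟩).mpr hk, rfl⟩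
      · rintro ⟨w, hw, rfl⟩
        exact ⟨w.2, (hG v w).mp hw⟩
    rw [himg, Set.ncard_image_of_injective _ Subtype.val_injective]
  constructor
  · -- E is a freezing set
    intro f hf hfix x hx
    obtain ⟨hmaps, hcont⟩ := hf
    set F : ↥X → ↥X := fun w => ⟨f ↑w, hmaps w.2⟩ with hFdef
    have hF : ∀ a b : ↥X, G.Adj a b → F a = F b ∨ G.Adj (F a) (F b) := by
      intro a b hab
      rcases hcont ↑a a.2 ↑b b.2 ((hG a b).mp hab) with h | h
      · exact Or.inl (Subtype.ext h)
      · exact Or.inr ((hG _ _).mpr h)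
    by_cases hxE : x ∈ E
    · exact hfix x hxE
    by_contra hne
    set v : ↥X := ⟨x, hx⟩ with hv
    have hFv : F v ≠ v := fun h => hne (congrArg Subtype.val h)
    have hconn := htree.isConnected
    obtain ⟨p, hp, hplen⟩ := hconn.exists_path_of_dist v (F v)
    have hpos : 0 < p.length := by
      rw [hplen]
      exact hconn.pos_dist_of_ne (id (Ne.symm hFv))
    have hva : G.Adj v (p.getVert 1) := by
      have := p.adj_getVert_succ (i := 0) hpos
      rwa [SimpleGraph.Walk.getVert_zero] at this
    have hnc : {w : ↥X | G.Adj v w}.ncard ≠ 1 := by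
      intro h
      exact hxE (by rw [hE]; exact ⟨hx, by rw [hdeg v]; exact h⟩)
    obtain ⟨b, hvb, hba⟩ : ∃ b : ↥X, G.Adj v b ∧ b ≠ p.getVert 1 := by
      by_contra hcon
      push_neg at hcon
      apply hnc
      have hset : {w : ↥X | G.Adj v w} = {p.getVert 1} :=
        Set.eq_singleton_iff_unique_mem.mpr ⟨hva, fun w hw => hcon w hw⟩
      rw [hset, Set.ncard_singleton]
    obtain ⟨l, q, hq, hqlen, hq1, hlnc⟩ := Stmt16Aux.exists_leaf htree hvb
    have hlE : ↑l ∈ E := by rw [hE]; exact ⟨l.2, by rw [hdeg l]; exact hlnc⟩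
    have hFl : F l = l := Subtype.ext (hfix _ hlE)
    have hdisj : ∀ z : ↥X, z ∈ q.support → z ∈ p.support → z = v := by
      intro z hzq hzp
      refine Stmt16Aux.diverge htree hq hp ?_ hzq hzp
      rw [hq1]
      exact hba
    have hcpath : (q.reverse.append p).IsPath := by
      rw [SimpleGraph.Walk.isPath_def, SimpleGraph.Walk.support_append]
      refine List.Nodup.append ?_ ?_ ?_
      · rw [SimpleGraph.Walk.support_reverse, List.nodup_reverse]
        exact hq.support_nodup
      · exact (List.tail_sublist _).nodup hp.support_nodup
      · intro z hz1 hz2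
        have hzq : z ∈ q.support := by
          rwa [SimpleGraph.Walk.support_reverse, List.mem_reverse] at hz1
        have hzp : z ∈ p.support := (List.tail_sublist _).subset hz2
        have hzv : z = v := hdisj z hzq hzp
        subst hzv
        have hnodup := hp.support_nodup
        rw [SimpleGraph.Walk.support_eq_cons] at hnodup
        exact (List.nodup_cons.mp hnodup).1 hz2
    have hd1 : (q.reverse.append p).length = G.dist l (F v) :=
      Stmt16Aux.path_length_eq_dist htree _ hcpath
    have hd2 : q.reverse.length = G.dist l v :=
      Stmt16Aux.path_length_eq_dist htree _ hq.reverse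
    have hle : G.dist (F l) (F v) ≤ G.dist l v := Stmt16Aux.dist_map_le hconn F hF l v
    rw [hFl] at hle
    rw [SimpleGraph.Walk.length_append, SimpleGraph.Walk.length_reverse] at hd1
    rw [SimpleGraph.Walk.length_reverse] at hd2
    omega
  · -- minimality
    intro B hBE hfr
    obtain ⟨l, hlE, hlB⟩ := Set.exists_of_ssubset hBE
    rw [hE] at hlE
    obtain ⟨hlX, hlnc⟩ := hlE
    obtain ⟨v₀, hv₀⟩ := Set.ncard_eq_one.mp hlnc
    have hv₀mem : v₀ ∈ X ∧ κ l v₀ := by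
      have : v₀ ∈ {q ∈ X | κ l q} := by rw [hv₀]; rfl
      exact this
    set f : (Fin n → ℤ) → (Fin n → ℤ) := fun z => if z = l then v₀ else z with hfdef
    have hInC : InC κ X f := by
      constructor
      · intro z hz
        by_cases hzl : z = l <;> simp [f, hzl, hv₀mem.1, hz]
      · intro a ha a' ha' hk
        by_cases h1 : a = l <;> by_cases h2 : a' = l
        · rw [h1, h2] at hk
          exact absurd hk (hirr l)
        · subst h1
          left
          have hmem : a' ∈ {q ∈ X | κ a q} := ⟨ha', hk⟩
          rw [hv₀, Set.mem_singleton_iff] at hmem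
          simp [f, h2, hmem]
        · subst h2
          left
          have hmem : a ∈ {q ∈ X | κ a' q} := ⟨ha, hsymm _ _ hk⟩
          rw [hv₀, Set.mem_singleton_iff] at hmem
          simp [f, h1, hmem]
        · right
          simpa [f, h1, h2] using hk
    have hfixB : ∀ a ∈ B, f a = a := by
      intro a haB
      have hal : a ≠ l := fun h => hlB (h ▸ haB)
      simp [f, hal]
    have hfl := hfr f hInC hfixB l hlX
    simp only [hfdef, if_pos rfl] at hfl
    have : κ l l := hfl ▸ hv₀mem.2
    exact hirr l this
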